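/- Let L ≥ 0 and let ξ, ζ : ℝ^d → ℝ be L-Lipschitz functions with ξ(x̃) ≤ ζ(x̃) for all x̃. For σ ∈ [0,1] set f_σ := σ·ξ + (1−σ)·ζ. Then there exists a constant C > 0 depending only on L such that for all x̃, x̃' ∈ ℝ^d and all σ, σ' ∈ [0,1]: (1/C) · ( |x̃ − x̃'| + |σ − σ'|·(ζ(x̃) − ξ(x̃)) ) ≤ | (x̃, f_σ(x̃)) − (x̃', f_{σ'}(x̃')) | ≤ C · ( |x̃ − x̃'| + |σ − σ'|·(ζ(x̃) − ξ(x̃)) ), where | · | denotes the Euclidean norm on ℝ^d × ℝ = ℝ^{d+1}. -/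

import Mathlib

/-- Two-sided distance comparison in the band between two uniformly Lipschitz graphs:
for `L`-Lipschitz `ξ ≤ ζ : ℝ^d → ℝ` and `f_σ := σ ξ + (1−σ) ζ`, there is `C > 0`
depending only on `L` such that the Euclidean distance between `(x, f_σ(x))` and
`(x', f_{σ'}(x'))` is comparable to `|x − x'| + |σ − σ'| (ζ(x) − ξ(x))`. -/
theorem stmt3 (d : ℕ) (L : ℝ) (hL : 0 ≤ L) :
    ∃ C : ℝ, 0 < C ∧
      ∀ ξ ζ : EuclideanSpace ℝ (Fin d) → ℝ,
        LipschitzWith L.toNNReal ξ → LipschitzWith L.toNNReal ζ →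
        (∀ x, ξ x ≤ ζ x) →
        ∀ (x x' : EuclideanSpace ℝ (Fin d)) (σ σ' : ℝ),
          σ ∈ Set.Icc (0 : ℝ) 1 → σ' ∈ Set.Icc (0 : ℝ) 1 →
          (1 / C) * (dist x x' + |σ - σ'| * (ζ x - ξ x)) ≤
            ‖(WithLp.equiv 2 (EuclideanSpace ℝ (Fin d) × ℝ)).symm
                (x, σ * ξ x + (1 - σ) * ζ x) -
              (WithLp.equiv 2 (EuclideanSpace ℝ (Fin d) × ℝ)).symm
                (x', σ' * ξ x' + (1 - σ') * ζ x')‖ ∧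
          ‖(WithLp.equiv 2 (EuclideanSpace ℝ (Fin d) × ℝ)).symm
                (x, σ * ξ x + (1 - σ) * ζ x) -
              (WithLp.equiv 2 (EuclideanSpace ℝ (Fin d) × ℝ)).symm
                (x', σ' * ξ x' + (1 - σ') * ζ x')‖ ≤
            C * (dist x x' + |σ - σ'| * (ζ x - ξ x)) := by
  refine ⟨3 * L + 2, by linarith, ?_⟩
  intro ξ ζ hξ hζ hle x x' σ σ' hσ hσ'
  set C : ℝ := 3 * L + 2 with hC
  have hCpos : (0 : ℝ) < C := by rw [hC]; linarith
  set a : ℝ := dist x x' with ha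
  have ha0 : 0 ≤ a := dist_nonneg
  set t : ℝ := σ * ξ x + (1 - σ) * ζ x with ht
  set t' : ℝ := σ' * ξ x' + (1 - σ') * ζ x' with ht'
  set v := (WithLp.equiv 2 (EuclideanSpace ℝ (Fin d) × ℝ)).symm (x, t) -
      (WithLp.equiv 2 (EuclideanSpace ℝ (Fin d) × ℝ)).symm (x', t') with hv
  have hvN : ‖v‖ ^ 2 = a ^ 2 + |t - t'| ^ 2 := by
    rw [hv, WithLp.prod_norm_sq_eq_of_L2]
    show ‖x - x'‖ ^ 2 + ‖t - t'‖ ^ 2 = _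
    rw [Real.norm_eq_abs, ha, dist_eq_norm]
  set N : ℝ := ‖v‖ with hN
  have hN0 : 0 ≤ N := norm_nonneg _
  set b : ℝ := |t - t'| with hb
  have hb0 : 0 ≤ b := abs_nonneg _
  have haN : a ≤ N := by nlinarith
  have hbN : b ≤ N := by nlinarith
  have hNab : N ≤ a + b := by nlinarith
  -- Lipschitz bounds
  have hLξ : |ξ x - ξ x'| ≤ L * a := by
    have := hξ.dist_le_mul x x'
    rwa [Real.dist_eq, Real.coe_toNNReal L hL] at this
  have hLζ : |ζ x - ζ x'| ≤ L * a := by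
    have := hζ.dist_le_mul x x'
    rwa [Real.dist_eq, Real.coe_toNNReal L hL] at this
  set s : ℝ := |σ - σ'| with hs
  set g : ℝ := ζ x - ξ x with hg
  have hg0 : 0 ≤ g := by have := hle x; rw [hg]; linarith
  set g' : ℝ := ζ x' - ξ x' with hg'
  have hgg' : |g - g'| ≤ 2 * L * a := by
    calc |g - g'| = |(ζ x - ζ x') - (ξ x - ξ x')| := by rw [hg, hg']; ring_nf
    _ ≤ |ζ x - ζ x'| + |ξ x - ξ x'| := abs_sub _ _
    _ ≤ 2 * L * a := by linarith
  have key : t - t' = (ζ x - ζ x') - σ' * (g - g') - (σ - σ') * g := by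
    rw [ht, ht', hg, hg']; ring
  have hσ'g : |σ' * (g - g')| ≤ 2 * L * a := by
    rw [abs_mul, abs_of_nonneg hσ'.1]
    calc σ' * |g - g'| ≤ 1 * |g - g'| :=
      mul_le_mul_of_nonneg_right hσ'.2 (abs_nonneg _)
    _ ≤ 2 * L * a := by linarith
  have hsg : |(σ - σ') * g| = s * g := by rw [abs_mul, abs_of_nonneg hg0]
  -- upper bound on b
  have hbup : b ≤ 3 * L * a + s * g := by
    rw [hb, key]
    calc |(ζ x - ζ x') - σ' * (g - g') - (σ - σ') * g|
        ≤ |(ζ x - ζ x') - σ' * (g - g')| + |(σ - σ') * g| := abs_sub _ _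
      _ ≤ (|ζ x - ζ x'| + |σ' * (g - g')|) + s * g := by
          rw [hsg]; exact add_le_add_left (abs_sub _ _) _
      _ ≤ 3 * L * a + s * g := by linarith
  -- lower bound: s * g ≤ b + 3 L a
  have hsglow : s * g ≤ b + 3 * L * a := by
    have : (σ - σ') * g = (ζ x - ζ x') - σ' * (g - g') - (t - t') := by
      rw [key]; ring
    calc s * g = |(σ - σ') * g| := hsg.symm
      _ = |(ζ x - ζ x') - σ' * (g - g') - (t - t')| := by rw [this]
      _ ≤ |(ζ x - ζ x') - σ' * (g - g')| + |t - t'| := abs_sub _ _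
      _ ≤ (|ζ x - ζ x'| + |σ' * (g - g')|) + b := by
          exact add_le_add_left (abs_sub _ _) _
      _ ≤ b + 3 * L * a := by linarith
  have hsg0 : 0 ≤ s * g := mul_nonneg (abs_nonneg _) hg0
  constructor
  · rw [div_mul_eq_mul_div, one_mul, div_le_iff₀ hCpos]
    have hLaN : L * a ≤ L * N := mul_le_mul_of_nonneg_left haN hL
    calc a + s * g ≤ N + (N + 3 * L * N) := by linarith
      _ = N * C := by rw [hC]; ring
  · have h1 : 0 ≤ L * a := mul_nonneg hL ha0
    have h2 : 0 ≤ L * (s * g) := mul_nonneg hL hsg0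
    calc N ≤ a + b := hNab
      _ ≤ (3 * L + 1) * a + s * g := by linarith
      _ ≤ C * (a + s * g) := by
          have hexp : C * (a + s * g) - ((3 * L + 1) * a + s * g)
              = L * (s * g) * 3 + a + s * g := by rw [hC]; ring
          linarith
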